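/- Fix points t₁, …, t_N ∈ ℝ^d, values y₁, …, y_N ∈ ℝ, weights w_j ≥ 0, λ > 0, a symmetric positive semidefinite N×N matrix E, and an N×(d+1) matrix T of full column rank. Then the constrained quadratic minimization inf{ ‖W^{1/2}(y − E s − T α)‖² + λ sᵀ E s : s ∈ ℝ^N, α ∈ ℝ^{d+1}, Tᵀ s = 0 } (with W = diag(w₁,…,w_N), y = (y₁,…,y_N)) is attained, and any minimizer (s, α) together with a Lagrange multiplier m ∈ ℝ^{d+1} satisfies the linear system: 2EWE s + 2λE s + 2EWT α + T m = 2EW y, 2TᵀWE s + 2TᵀWT α = 2TᵀW y, Tᵀ s = 0. -/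

import Mathlib

open Matrix


lemma quad_coeff_zero {a b : ℝ} (ha : 0 ≤ a) (h : ∀ t : ℝ, 0 ≤ a * t ^ 2 + b * t) : b = 0 := by
  by_contra hb
  have hb2 : 0 < b ^ 2 := by positivity
  have hpos : 0 < a + 1 := by linarith
  have h1 := h (-(b / (2 * (a + 1))))
  have key : a * (-(b / (2 * (a + 1)))) ^ 2 + b * (-(b / (2 * (a + 1))))
      = -(b ^ 2 * (a + 2)) / (4 * (a + 1) ^ 2) := by
    field_simp
    ring
  rw [key] at h1
  have h2 : 0 < b ^ 2 * (a + 2) := by nlinarith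
  have h3 : 0 < b ^ 2 * (a + 2) / (4 * (a + 1) ^ 2) := div_pos h2 (by positivity)
  rw [neg_div] at h1
  linarith

lemma mem_range_of_perp {N K : ℕ} (T : Matrix (Fin N) (Fin K) ℝ) (g : Fin N → ℝ)
    (h : ∀ u : Fin N → ℝ, T.transpose.mulVec u = 0 → u ⬝ᵥ g = 0) :
    ∃ m : Fin K → ℝ, T.mulVec m = g := by
  classical
  set V : Submodule ℝ (EuclideanSpace ℝ (Fin N)) := LinearMap.range (Matrix.toEuclideanLin T)
  obtain ⟨p, hp, q, hq, hg⟩ := V.exists_add_mem_mem_orthogonal (WithLp.toLp 2 g)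
  have hinner : ∀ (x z : EuclideanSpace ℝ (Fin N)), (inner ℝ x z : ℝ) = x ⬝ᵥ z := by
    intro x z
    simp [PiLp.inner_apply, RCLike.inner_apply, dotProduct, mul_comm]
  have hqT : T.transpose.mulVec q = 0 := by
    funext k
    have hcol : (Matrix.toEuclideanLin T) (EuclideanSpace.single k 1) ∈ V :=
      LinearMap.mem_range_self _ _
    have h2 := (Submodule.mem_orthogonal V q).mp hq _ hcol
    rw [hinner] at h2
    have hcol2 : ((Matrix.toEuclideanLin T) (EuclideanSpace.single k 1) : Fin N → ℝ)
        = fun i => T i k := by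
      funext i
      simp [Matrix.toEuclideanLin_apply, Matrix.mulVec_single]
    rw [hcol2] at h2
    simpa [Matrix.mulVec, dotProduct, Matrix.transpose_apply, mul_comm] using h2
  have hq0 : q = 0 := by
    have hqg := h q hqT
    have hqp : (inner ℝ q p : ℝ) = 0 := (Submodule.mem_orthogonal' V q).mp hq p hp
    rw [hinner] at hqp
    have h3 : (q : Fin N → ℝ) ⬝ᵥ g = q ⬝ᵥ p + q ⬝ᵥ q := by
      rw [show g = p.ofLp + q.ofLp from by rw [← WithLp.ofLp_add, ← hg]]; exact dotProduct_add _ _ _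
    rw [hqg, hqp] at h3
    have h5 : q.ofLp = 0 := dotProduct_self_eq_zero.mp (by linarith)
    simpa using congrArg (WithLp.toLp 2) h5
  obtain ⟨m, hm⟩ := hp
  refine ⟨m, ?_⟩
  have h4 : (Matrix.toEuclideanLin T) m = T.mulVec m := by
    funext i; rfl
  rw [← h4, hm, show g = (p + q).ofLp from by rw [← hg], hq0, add_zero]


open scoped MatrixOrder in
lemma stmt19_part1 {N d : ℕ} (y w : Fin N → ℝ) (hw : ∀ i, 0 ≤ w i)
    (lam : ℝ) (hlam : 0 < lam)
    (E : Matrix (Fin N) (Fin N) ℝ) (hE : E.PosSemidef)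
    (T : Matrix (Fin N) (Fin (d + 1)) ℝ)
    (J : (Fin N → ℝ) → (Fin (d + 1) → ℝ) → ℝ)
    (hJ : ∀ s' α', J s' α' =
      (∑ i, w i * (y i - (E.mulVec s' + T.mulVec α') i) ^ 2) + lam * (s' ⬝ᵥ E.mulVec s')) :
    ∃ s α, T.transpose.mulVec s = 0 ∧
      ∀ s' α', T.transpose.mulVec s' = 0 → J s α ≤ J s' α' := by
  classical
  set R := CFC.sqrt E with hRdef
  have hRt : R.transpose = R := by
    have := (CFC.sqrt_nonneg E).posSemidef.isHermitian
    simpa [Matrix.IsHermitian, Matrix.conjTranspose_eq_transpose_of_trivial] using this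
  have hRE : R * R = E := CFC.sqrt_mul_sqrt_self E hE.nonneg
  have hRR : ∀ x : Fin N → ℝ, (∑ i, (R.mulVec x) i ^ 2) = x ⬝ᵥ E.mulVec x := by
    intro x
    calc ∑ i, (R.mulVec x) i ^ 2 = (R.mulVec x) ⬝ᵥ (R.mulVec x) := by
          simp [dotProduct, sq]
      _ = ((R.mulVec x) ᵥ* R) ⬝ᵥ x := dotProduct_mulVec _ _ _
      _ = (R.transpose.mulVec (R.mulVec x)) ⬝ᵥ x := by rw [mulVec_transpose]
      _ = ((R * R).mulVec x) ⬝ᵥ x := by rw [hRt, mulVec_mulVec]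
      _ = (E.mulVec x) ⬝ᵥ x := by rw [hRE]
      _ = x ⬝ᵥ E.mulVec x := dotProduct_comm _ _
  -- the linear map into Euclidean space
  set F : ((Fin N → ℝ) × (Fin (d + 1) → ℝ)) →ₗ[ℝ] EuclideanSpace ℝ (Fin N ⊕ Fin N) :=
    { toFun := fun p => WithLp.toLp 2 (fun j => Sum.elim
        (fun i => Real.sqrt (w i) * ((E.mulVec p.1 + T.mulVec p.2) i))
        (fun i => Real.sqrt lam * ((R.mulVec p.1) i)) j)
      map_add' := by
        intro p q
        ext j
        rw [PiLp.add_apply]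
        cases j with
        | inl i => simp [Matrix.mulVec_add]; ring
        | inr i => simp [Matrix.mulVec_add]; ring
      map_smul' := by
        intro c p
        ext j
        rw [PiLp.smul_apply]
        cases j with
        | inl i => simp [Matrix.mulVec_smul]; ring
        | inr i => simp [Matrix.mulVec_smul]; ring } with hF
  set b : EuclideanSpace ℝ (Fin N ⊕ Fin N) :=
    WithLp.toLp 2 (fun j => Sum.elim (fun i => Real.sqrt (w i) * y i) (fun _ => (0:ℝ)) j) with hb
  have hJnorm : ∀ s' α', J s' α' = ‖b - F (s', α')‖ ^ 2 := by
    intro s' α'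
    rw [hJ]
    rw [EuclideanSpace.norm_eq]
    rw [Real.sq_sqrt (by positivity)]
    rw [Fintype.sum_sum_type]
    have h1 : ∀ i : Fin N, ‖(b - F (s', α')) (Sum.inl i)‖ ^ 2
        = w i * (y i - (E.mulVec s' + T.mulVec α') i) ^ 2 := by
      intro i
      rw [PiLp.sub_apply]
      show ‖Real.sqrt (w i) * y i - Real.sqrt (w i) * ((E.mulVec s' + T.mulVec α') i)‖ ^ 2 = _
      rw [Real.norm_eq_abs, sq_abs, ← mul_sub, mul_pow, Real.sq_sqrt (hw i)]
    have h2 : ∀ i : Fin N, ‖(b - F (s', α')) (Sum.inr i)‖ ^ 2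
        = lam * ((R.mulVec s') i) ^ 2 := by
      intro i
      rw [PiLp.sub_apply]
      show ‖(0:ℝ) - Real.sqrt lam * ((R.mulVec s') i)‖ ^ 2 = _
      rw [Real.norm_eq_abs, sq_abs, zero_sub, neg_pow, mul_pow, Real.sq_sqrt hlam.le]
      ring
    rw [Finset.sum_congr rfl fun i _ => h1 i, Finset.sum_congr rfl fun i _ => h2 i]
    rw [← Finset.mul_sum, hRR]
  -- the feasible subspace and its image
  set V : Submodule ℝ ((Fin N → ℝ) × (Fin (d + 1) → ℝ)) :=
    LinearMap.ker ((Matrix.mulVecLin T.transpose).comp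
      (LinearMap.fst ℝ (Fin N → ℝ) (Fin (d + 1) → ℝ))) with hV
  set K : Submodule ℝ (EuclideanSpace ℝ (Fin N ⊕ Fin N)) := Submodule.map F V with hK
  obtain ⟨p, hpK, q, hq, hbpq⟩ := K.exists_add_mem_mem_orthogonal b
  obtain ⟨⟨s, α⟩, hsV, hFp⟩ := hpK
  refine ⟨s, α, ?_, ?_⟩
  · exact LinearMap.mem_ker.mp hsV
  · intro s' α' hfeas
    rw [hJnorm, hJnorm, hFp]
    have hmem : F (s', α') ∈ K := by
      exact ⟨(s', α'), LinearMap.mem_ker.mpr hfeas, rfl⟩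
    have hbp : b - p = q := by rw [hbpq]; abel
    have hdecomp : b - F (s', α') = q + (p - F (s', α')) := by rw [hbpq]; abel
    rw [hbp, hdecomp, norm_add_sq_real]
    have hinner : (inner ℝ q (p - F (s', α')) : ℝ) = 0 :=
      (Submodule.mem_orthogonal' K q).mp hq _ (Submodule.sub_mem K ⟨(s, α), hsV, hFp⟩ hmem)
    rw [hinner]
    nlinarith [sq_nonneg ‖p - F (s', α')‖, sq_nonneg ‖q‖]


lemma stmt19_part2 {N d : ℕ} (y w : Fin N → ℝ) (hw : ∀ i, 0 ≤ w i)
    (lam : ℝ) (hlam : 0 < lam)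
    (E : Matrix (Fin N) (Fin N) ℝ) (hE : E.PosSemidef)
    (T : Matrix (Fin N) (Fin (d + 1)) ℝ)
    (W : Matrix (Fin N) (Fin N) ℝ) (hWdef : W = Matrix.diagonal w)
    (J : (Fin N → ℝ) → (Fin (d + 1) → ℝ) → ℝ)
    (hJ : ∀ s' α', J s' α' =
      (∑ i, w i * (y i - (E.mulVec s' + T.mulVec α') i) ^ 2) + lam * (s' ⬝ᵥ E.mulVec s'))
    (s : Fin N → ℝ) (α : Fin (d+1) → ℝ) (hs : T.transpose.mulVec s = 0)
    (hmin : ∀ s' α', T.transpose.mulVec s' = 0 → J s α ≤ J s' α') :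
      ∃ m : Fin (d + 1) → ℝ,
        (2 : ℝ) • ((E * W * E).mulVec s) + (2 * lam) • E.mulVec s +
            (2 : ℝ) • ((E * W * T).mulVec α) + T.mulVec m =
          (2 : ℝ) • ((E * W).mulVec y) ∧
        (2 : ℝ) • ((T.transpose * W * E).mulVec s) +
            (2 : ℝ) • ((T.transpose * W * T).mulVec α) =
          (2 : ℝ) • ((T.transpose * W).mulVec y) ∧
        T.transpose.mulVec s = 0 := by
  classical
  have hEnn : ∀ x : Fin N → ℝ, 0 ≤ x ⬝ᵥ E.mulVec x := by
    intro x; have := hE.dotProduct_mulVec_nonneg x; simpa using this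
  have hEt : E.transpose = E := by
    have := hE.isHermitian; simpa [Matrix.IsHermitian, Matrix.conjTranspose_eq_transpose_of_trivial] using this
  have hsymm : ∀ x z : Fin N → ℝ, x ⬝ᵥ E.mulVec z = z ⬝ᵥ E.mulVec x := by
    intro x z
    rw [dotProduct_mulVec, ← mulVec_transpose, hEt, dotProduct_comm]
  set r : Fin N → ℝ := fun i => y i - (E.mulVec s + T.mulVec α) i with hr
  -- the key first-order condition
  have key : ∀ (u : Fin N → ℝ) (β : Fin (d+1) → ℝ), T.transpose.mulVec u = 0 →
      (∑ i, w i * r i * ((E.mulVec u + T.mulVec β) i)) = lam * (u ⬝ᵥ E.mulVec s) := by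
    intro u β hu
    set c : Fin N → ℝ := fun i => (E.mulVec u + T.mulVec β) i with hc
    set a : ℝ := (∑ i, w i * c i ^ 2) + lam * (u ⬝ᵥ E.mulVec u) with hadef
    set bb : ℝ := (-2) * (∑ i, w i * r i * c i) + 2 * lam * (u ⬝ᵥ E.mulVec s) with hbbdef
    have ha : 0 ≤ a := add_nonneg
      (Finset.sum_nonneg fun i _ => mul_nonneg (hw i) (sq_nonneg _))
      (mul_nonneg hlam.le (hEnn u))
    have hquad : ∀ t : ℝ, 0 ≤ a * t ^ 2 + bb * t := by
      intro t
      have hfeas : T.transpose.mulVec (s + t • u) = 0 := by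
        rw [mulVec_add, mulVec_smul, hs, hu]; simp
      have hle := hmin (s + t • u) (α + t • β) hfeas
      rw [hJ, hJ] at hle
      have hdot : (s + t • u) ⬝ᵥ E.mulVec (s + t • u)
          = s ⬝ᵥ E.mulVec s + 2 * t * (u ⬝ᵥ E.mulVec s) + t ^ 2 * (u ⬝ᵥ E.mulVec u) := by
        have hcmm := hsymm s u
        simp only [mulVec_add, mulVec_smul, dotProduct_add, add_dotProduct,
          dotProduct_smul, smul_dotProduct, smul_eq_mul]
        linear_combination t * hcmm
      have hpt : ∀ i, y i - (E.mulVec (s + t • u) + T.mulVec (α + t • β)) i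
          = r i - t * c i := by
        intro i
        simp only [hr, hc, mulVec_add, mulVec_smul, Pi.add_apply, Pi.smul_apply, smul_eq_mul]
        ring
      have hsum : (∑ i, w i * (y i - (E.mulVec (s + t • u) + T.mulVec (α + t • β)) i) ^ 2)
          = (∑ i, w i * (y i - (E.mulVec s + T.mulVec α) i) ^ 2)
            + (∑ i, w i * c i ^ 2) * t ^ 2 - (∑ i, w i * r i * c i) * (2 * t) := by
        have step : ∀ i ∈ Finset.univ,
            w i * (y i - (E.mulVec (s + t • u) + T.mulVec (α + t • β)) i) ^ 2
            = w i * (y i - (E.mulVec s + T.mulVec α) i) ^ 2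
              + (w i * c i ^ 2) * t ^ 2 - (w i * r i * c i) * (2 * t) := by
          intro i _
          rw [hpt i]
          simp only [hr]
          ring
        rw [Finset.sum_congr rfl step]
        rw [Finset.sum_sub_distrib, Finset.sum_add_distrib, ← Finset.sum_mul, ← Finset.sum_mul]
      rw [hsum, hdot] at hle
      rw [hadef, hbbdef]
      set S1 := ∑ i, w i * (y i - (E.mulVec s + T.mulVec α) i) ^ 2 with hS1
      set S2 := ∑ i, w i * c i ^ 2 with hS2
      set S3 := ∑ i, w i * r i * c i with hS3
      set D1 := s ⬝ᵥ E.mulVec s with hD1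
      set D2 := u ⬝ᵥ E.mulVec s with hD2
      set D3 := u ⬝ᵥ E.mulVec u with hD3
      nlinarith [hle]
    have hbb := quad_coeff_zero ha hquad
    rw [hbbdef] at hbb
    have : ∑ i, w i * r i * c i = lam * (u ⬝ᵥ E.mulVec s) := by linarith
    simpa [hc] using this
  -- equation 2
  have hWx : ∀ x : Fin N → ℝ, W.mulVec x = fun i => w i * x i := by
    intro x; funext i; rw [hWdef]; exact mulVec_diagonal _ _ _
  have h2 : T.transpose.mulVec (W.mulVec r) = 0 := by
    funext k
    have hk := key 0 (Pi.single k 1) (by simp)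
    simp only [mulVec_zero, zero_add, zero_dotProduct, mul_zero, mulVec_single, mul_one,
      MulOpposite.op_one, one_smul, Matrix.col_apply']
      at hk
    rw [hWx]
    simp only [Matrix.mulVec, dotProduct, Matrix.transpose_apply, Pi.zero_apply]
    rw [← hk]
    exact Finset.sum_congr rfl fun i _ => by ring
  -- residual expansion
  have hWr : W.mulVec r = W.mulVec y - W.mulVec (E.mulVec s) - W.mulVec (T.mulVec α) := by
    have : r = y - (E.mulVec s + T.mulVec α) := rfl
    rw [this, mulVec_sub, mulVec_add]
    abel
  have eq2 : (2 : ℝ) • ((T.transpose * W * E).mulVec s) +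
      (2 : ℝ) • ((T.transpose * W * T).mulVec α) = (2 : ℝ) • ((T.transpose * W).mulVec y) := by
    have e1 : (T.transpose * W * E).mulVec s = T.transpose.mulVec (W.mulVec (E.mulVec s)) := by
      rw [← mulVec_mulVec, ← mulVec_mulVec]
    have e2 : (T.transpose * W * T).mulVec α = T.transpose.mulVec (W.mulVec (T.mulVec α)) := by
      rw [← mulVec_mulVec, ← mulVec_mulVec]
    have e3 : (T.transpose * W).mulVec y = T.transpose.mulVec (W.mulVec y) := by
      rw [← mulVec_mulVec]
    rw [e1, e2, e3]
    rw [hWr, mulVec_sub, mulVec_sub] at h2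
    funext i
    have := congrFun h2 i
    simp only [Pi.add_apply, Pi.smul_apply, Pi.sub_apply, Pi.zero_apply, smul_eq_mul] at this ⊢
    linarith
  -- equation 1
  set g : Fin N → ℝ := E.mulVec (W.mulVec r) - lam • E.mulVec s with hg
  have hperp : ∀ u : Fin N → ℝ, T.transpose.mulVec u = 0 → u ⬝ᵥ g = 0 := by
    intro u hu
    have hk := key u 0 hu
    simp only [mulVec_zero, add_zero] at hk
    have hdp : u ⬝ᵥ E.mulVec (W.mulVec r) = ∑ i, w i * r i * (E.mulVec u) i := by
      rw [hsymm u (W.mulVec r), hWx]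
      simp only [dotProduct]
    rw [hg]
    rw [dotProduct_sub, dotProduct_smul, hdp, hk, smul_eq_mul]
    ring
  obtain ⟨m', hm'⟩ := mem_range_of_perp T g hperp
  refine ⟨(2 : ℝ) • m', ?_, eq2, hs⟩
  have hTm : T.mulVec ((2 : ℝ) • m') = (2 : ℝ) • g := by
    rw [mulVec_smul, hm']
  rw [hTm, hg]
  have f1 : (E * W * E).mulVec s = E.mulVec (W.mulVec (E.mulVec s)) := by
    rw [← mulVec_mulVec, ← mulVec_mulVec]
  have f2 : (E * W * T).mulVec α = E.mulVec (W.mulVec (T.mulVec α)) := by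
    rw [← mulVec_mulVec, ← mulVec_mulVec]
  have f3 : (E * W).mulVec y = E.mulVec (W.mulVec y) := by
    rw [← mulVec_mulVec]
  rw [f1, f2, f3, hWr, mulVec_sub, mulVec_sub]
  module


theorem stmt_19 (N d : ℕ) (y w : Fin N → ℝ) (hw : ∀ i, 0 ≤ w i)
    (lam : ℝ) (hlam : 0 < lam)
    (E : Matrix (Fin N) (Fin N) ℝ) (hE : E.PosSemidef)
    (T : Matrix (Fin N) (Fin (d + 1)) ℝ)
    (hT : LinearIndependent ℝ (fun j : Fin (d + 1) => fun i => T i j)) :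
    let W : Matrix (Fin N) (Fin N) ℝ := Matrix.diagonal w
    let J : (Fin N → ℝ) → (Fin (d + 1) → ℝ) → ℝ := fun s α =>
      (∑ i, w i * (y i - (E.mulVec s + T.mulVec α) i) ^ 2) + lam * (s ⬝ᵥ E.mulVec s)
    (∃ s α, T.transpose.mulVec s = 0 ∧
      ∀ s' α', T.transpose.mulVec s' = 0 → J s α ≤ J s' α') ∧
    (∀ s α, T.transpose.mulVec s = 0 →
      (∀ s' α', T.transpose.mulVec s' = 0 → J s α ≤ J s' α') →
      ∃ m : Fin (d + 1) → ℝ,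
        (2 : ℝ) • ((E * W * E).mulVec s) + (2 * lam) • E.mulVec s +
            (2 : ℝ) • ((E * W * T).mulVec α) + T.mulVec m =
          (2 : ℝ) • ((E * W).mulVec y) ∧
        (2 : ℝ) • ((T.transpose * W * E).mulVec s) +
            (2 : ℝ) • ((T.transpose * W * T).mulVec α) =
          (2 : ℝ) • ((T.transpose * W).mulVec y) ∧
        T.transpose.mulVec s = 0) := by
  intro W J
  have hJ : ∀ s' α', J s' α' =
      (∑ i, w i * (y i - (E.mulVec s' + T.mulVec α') i) ^ 2) + lam * (s' ⬝ᵥ E.mulVec s') :=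
    fun _ _ => rfl
  constructor
  · exact stmt19_part1 y w hw lam hlam E hE T J hJ
  · intro s α hs hmin
    exact stmt19_part2 y w hw lam hlam E hE T W rfl J hJ s α hs hmin
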